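/- Let λ > 0, Γ > 0 with λΓ ≥ e^(2e), and let A : [0,∞) → ℕ be a counting function satisfying the constraint that for every k ≥ 1, the time of the k-th arrival T_k satisfies |T_k − k/λ| ≤ Γ·φ(k), where φ(k) = √(k·ln(ln k)) for k ≥ e^e and φ(k) = 1 otherwise, and A(t) = max{k : T_k ≤ t} (A(t) = 0 if no arrival by time t). Then for every t ≥ max(e^e/λ, 1/λ + 3λ²Γ²/λ), we have A(t) ≤ λt + 3λ²Γ²·φ(λt). -/

import Mathlib

set_option maxHeartbeats 2000000

open Real

noncomputable def phi (x : ℝ) : ℝ :=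
  if Real.exp (Real.exp 1) ≤ x then Real.sqrt (x * Real.log (Real.log x)) else 1

lemma phi_nonneg (x : ℝ) : 0 ≤ phi x := by
  unfold phi; split
  · exact Real.sqrt_nonneg _
  · norm_num

lemma log_le_two_sqrt {y : ℝ} (hy : 0 < y) : Real.log y ≤ 2 * Real.sqrt y := by
  have h1 : Real.log (Real.sqrt y) ≤ Real.sqrt y - 1 :=
    Real.log_le_sub_one_of_pos (Real.sqrt_pos.mpr hy)
  have h2 : Real.log (Real.sqrt y) = Real.log y / 2 := Real.log_sqrt hy.le
  nlinarith [Real.sqrt_nonneg y]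

/-- Lemma 5.1: if the arrival epochs satisfy the LIL-type constraint
|T k - k/λ| ≤ Γ φ(k), then the counting process A(t) = max{k : T k ≤ t} satisfies
A(t) ≤ λ t + 3 λ² Γ² φ(λ t) for all t ≥ max(e^e/λ, 1/λ + 3 λ² Γ²/λ). -/
theorem stmt11 (lam Γ : ℝ) (hlam : 0 < lam) (hΓ : 0 < Γ)
    (hlamΓ : Real.exp (2 * Real.exp 1) ≤ lam * Γ)
    (T : ℕ → ℝ) (hT : Monotone T)
    (hLIL : ∀ k : ℕ, 1 ≤ k → |T k - k / lam| ≤ Γ * phi k)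
    (A : ℝ → ℕ)
    (hA : ∀ t : ℝ, 0 ≤ t → ∀ k : ℕ, 1 ≤ k → (k ≤ A t ↔ T k ≤ t)) :
    ∀ t : ℝ,
      max (Real.exp (Real.exp 1) / lam) (1 / lam + 3 * lam ^ 2 * Γ ^ 2 / lam) ≤ t →
        (A t : ℝ) ≤ lam * t + 3 * lam ^ 2 * Γ ^ 2 * phi (lam * t) := by
  intro t ht
  set c : ℝ := lam * Γ with hcdef
  have hcpos : 0 < c := mul_pos hlam hΓ
  -- numeric bound on c
  have hc143 : (143 : ℝ) ≤ c := by
    have he : (2.7182818283 : ℝ) < Real.exp 1 := Real.exp_one_gt_d9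
    have h2 : (5 : ℝ) ≤ 2 * Real.exp 1 := by nlinarith
    have h3 : Real.exp 5 ≤ Real.exp (2 * Real.exp 1) := Real.exp_le_exp.mpr h2
    have h4 : (2.7182818283 : ℝ) ^ (5:ℕ) ≤ Real.exp 1 ^ (5:ℕ) := by
      apply pow_le_pow_left₀ (by norm_num) he.le
    have h5 : Real.exp 1 ^ (5:ℕ) = Real.exp 5 := by rw [← Real.exp_nat_mul]; norm_num
    nlinarith [hlamΓ]
  set x : ℝ := lam * t with hxdef
  -- x ≥ e^e
  have hxee : Real.exp (Real.exp 1) ≤ x := by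
    have h1 : Real.exp (Real.exp 1) / lam ≤ t := le_trans (le_max_left _ _) ht
    have := mul_le_mul_of_nonneg_left h1 hlam.le
    rw [mul_div_cancel₀ _ (ne_of_gt hlam)] at this
    linarith
  -- x ≥ 1 + 3 c²
  have hxc : 1 + 3 * c ^ 2 ≤ x := by
    have h1 : 1 / lam + 3 * lam ^ 2 * Γ ^ 2 / lam ≤ t := le_trans (le_max_right _ _) ht
    have h0 := mul_le_mul_of_nonneg_left h1 hlam.le
    have h2 : lam * (1 / lam + 3 * lam ^ 2 * Γ ^ 2 / lam) = 1 + 3 * c ^ 2 := by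
      rw [hcdef]; field_simp
    rw [h2] at h0
    linarith
  have hx2 : (2:ℝ) ≤ x := by
    have h1 : (1:ℝ) + 1 ≤ Real.exp 1 := Real.add_one_le_exp 1
    have h2 : Real.exp 1 + 1 ≤ Real.exp (Real.exp 1) := by
      linarith [Real.add_one_le_exp (Real.exp 1)]
    linarith
  have hxpos : (0:ℝ) < x := by linarith
  have ht0 : (0:ℝ) ≤ t := by
    by_contra h
    push_neg at h
    nlinarith
  -- log log x ≥ 1
  have hlogx : Real.exp 1 ≤ Real.log x := by
    calc Real.exp 1 = Real.log (Real.exp (Real.exp 1)) := (Real.log_exp _).symm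
    _ ≤ Real.log x := Real.log_le_log (Real.exp_pos _) hxee
  have hlogxpos : (0:ℝ) < Real.log x := lt_of_lt_of_le (Real.exp_pos 1) hlogx
  have hLx1 : (1:ℝ) ≤ Real.log (Real.log x) := by
    calc (1:ℝ) = Real.log (Real.exp 1) := (Real.log_exp 1).symm
    _ ≤ Real.log (Real.log x) := Real.log_le_log (Real.exp_pos 1) hlogx
  set Lx : ℝ := Real.log (Real.log x) with hLxdef
  have hphix : phi x = Real.sqrt (x * Lx) := by unfold phi; rw [if_pos hxee]
  have hsLx : Real.sqrt 3 * c ≤ Real.sqrt (x * Lx) := by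
    have h1 : 3 * c ^ 2 ≤ x * Lx := by nlinarith
    have h2 : Real.sqrt (3 * c ^ 2) ≤ Real.sqrt (x * Lx) := Real.sqrt_le_sqrt h1
    have h3 : Real.sqrt (3 * c ^ 2) = Real.sqrt 3 * c := by
      rw [Real.sqrt_mul (by norm_num), Real.sqrt_sq hcpos.le]
    rw [h3] at h2
    exact h2
  have hsqrt3 : (1.7:ℝ) ≤ Real.sqrt 3 :=
    by nlinarith [Real.sq_sqrt (show (0:ℝ) ≤ 3 by norm_num), Real.sqrt_nonneg 3]
  have hsqnn : (0:ℝ) ≤ Real.sqrt (x * Lx) := Real.sqrt_nonneg _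
  -- key goal reformulation
  have hgoal : (A t : ℝ) ≤ x + 3 * c ^ 2 * Real.sqrt (x * Lx) → (A t : ℝ) ≤
      lam * t + 3 * lam ^ 2 * Γ ^ 2 * phi (lam * t) := by
    intro h
    have heq : phi (lam * t) = Real.sqrt (x * Lx) := hphix
    rw [heq]
    have hcc : 3 * lam ^ 2 * Γ ^ 2 * Real.sqrt (x * Lx) = 3 * c ^ 2 * Real.sqrt (x * Lx) := by
      rw [hcdef]; ring
    rw [hcc]
    linarith
  apply hgoal
  -- dispose of A t = 0
  rcases Nat.eq_zero_or_pos (A t) with h0 | h1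
  · rw [h0]
    push_cast
    have hpos : (0:ℝ) ≤ 3 * c ^ 2 * Real.sqrt (x * Lx) := by positivity
    linarith
  set m : ℝ := (A t : ℝ) with hmdef
  have hm1 : (1:ℝ) ≤ m := by
    rw [hmdef]
    exact_mod_cast h1
  have hTm : T (A t) ≤ t := (hA t ht0 (A t) h1).mp le_rfl
  have habs := hLIL (A t) h1
  have hmx : m ≤ x + c * phi m := by
    rw [hmdef]
    have h2 := (abs_le.mp habs).1
    have h3 : (A t : ℝ) / lam ≤ t + Γ * phi (A t) := by linarith
    have h4 := mul_le_mul_of_nonneg_left h3 hlam.le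
    rw [mul_div_cancel₀ _ (ne_of_gt hlam)] at h4
    have h5 : lam * (t + Γ * phi (A t : ℝ)) = x + c * phi (A t : ℝ) := by
      rw [hxdef, hcdef]; ring
    rw [h5] at h4
    exact h4
  clear_value m
  clear habs hTm
  rcases le_or_gt m x with hcase | hcase
  · have hpos : (0:ℝ) ≤ 3 * c ^ 2 * Real.sqrt (x * Lx) := by positivity
    linarith
  -- now m > x ≥ e^e
  have hmee : Real.exp (Real.exp 1) ≤ m := by linarith
  have hmpos : (0:ℝ) < m := by linarith
  have hphim : phi m = Real.sqrt (m * Real.log (Real.log m)) := by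
    unfold phi; rw [if_pos hmee]
  rw [hphim] at hmx
  have hlogm : Real.exp 1 ≤ Real.log m := by
    calc Real.exp 1 = Real.log (Real.exp (Real.exp 1)) := (Real.log_exp _).symm
    _ ≤ Real.log m := Real.log_le_log (Real.exp_pos _) hmee
  have hlogmpos : (0:ℝ) < Real.log m := lt_of_lt_of_le (Real.exp_pos 1) hlogm
  have hLm1 : (1:ℝ) ≤ Real.log (Real.log m) := by
    calc (1:ℝ) = Real.log (Real.exp 1) := (Real.log_exp 1).symm
    _ ≤ Real.log (Real.log m) := Real.log_le_log (Real.exp_pos 1) hlogm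
  set Lm : ℝ := Real.log (Real.log m) with hLmdef
  rcases le_or_gt m (2 * x) with hc2 | hc2
  · -- moderate case : m ≤ 2x
    have hLm2Lx : Lm ≤ 2 * Lx := by
      have h1 : m ≤ x ^ 2 := by nlinarith
      have h2 : Real.log m ≤ 2 * Real.log x := by
        calc Real.log m ≤ Real.log (x ^ 2) := Real.log_le_log hmpos h1
        _ = 2 * Real.log x := by
          rw [Real.log_pow]; push_cast; ring
      have h3 : Lm ≤ Real.log (2 * Real.log x) := by
        rw [hLmdef]
        exact Real.log_le_log hlogmpos (by linarith)
      have h4 : Real.log (2 * Real.log x) = Real.log 2 + Lx := by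
        rw [Real.log_mul (by norm_num) (ne_of_gt hlogxpos), hLxdef]
      have h5 : Real.log 2 ≤ 1 := by
        have := Real.log_le_sub_one_of_pos (show (0:ℝ) < 2 by norm_num); linarith
      linarith
    have h6 : m * Lm ≤ 4 * (x * Lx) := by nlinarith
    have h7 : Real.sqrt (m * Lm) ≤ 2 * Real.sqrt (x * Lx) := by
      have hh := Real.sqrt_le_sqrt h6
      have h8 : Real.sqrt (4 * (x * Lx)) = 2 * Real.sqrt (x * Lx) := by
        rw [Real.sqrt_mul (by norm_num), show Real.sqrt 4 = 2 by
          rw [show (4:ℝ) = 2 ^ 2 by norm_num, Real.sqrt_sq (by norm_num)]]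
      rw [h8] at hh
      exact hh
    have h9 : c * Real.sqrt (m * Lm) ≤ c * (2 * Real.sqrt (x * Lx)) :=
      mul_le_mul_of_nonneg_left h7 hcpos.le
    have h10 : 2 * c ≤ 3 * c ^ 2 := by nlinarith
    nlinarith [hsqnn]
  · -- extreme case : m > 2x
    have hs0 : (0:ℝ) ≤ Real.sqrt (m * Lm) := Real.sqrt_nonneg _
    have hmLm : m ^ 2 < 4 * c ^ 2 * (m * Lm) := by
      have h1 : m / 2 < c * Real.sqrt (m * Lm) := by linarith
      have h2 : Real.sqrt (m * Lm) ^ 2 = m * Lm :=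
        Real.sq_sqrt (by nlinarith)
      nlinarith
    have hmL : m < 4 * c ^ 2 * Lm := by nlinarith
    -- Lm ≤ 2√2 · s where s = √√m
    set s : ℝ := Real.sqrt (Real.sqrt m) with hsdef
    have hspos : 0 < s := Real.sqrt_pos.mpr (Real.sqrt_pos.mpr hmpos)
    have hs2 : s ^ 2 = Real.sqrt m := Real.sq_sqrt (Real.sqrt_nonneg m)
    have hs4 : s ^ 4 = m := by
      have hh : Real.sqrt m ^ 2 = m := Real.sq_sqrt hmpos.le
      calc s ^ 4 = (s ^ 2) ^ 2 := by ring
      _ = Real.sqrt m ^ 2 := by rw [hs2]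
      _ = m := hh
    have hlm2s : Real.log m ≤ 2 * s ^ 2 := by
      have hh := log_le_two_sqrt hmpos
      rw [← hs2] at hh
      exact hh
    have hsqrt2nn : (0:ℝ) ≤ Real.sqrt 2 := Real.sqrt_nonneg 2
    have hsqrt2 : Real.sqrt 2 ^ 2 = 2 := Real.sq_sqrt (by norm_num)
    have hLm2s : Lm ≤ 2 * (Real.sqrt 2 * s) := by
      have h1 : Lm ≤ 2 * Real.sqrt (Real.log m) := log_le_two_sqrt hlogmpos
      have h2 : Real.sqrt (Real.log m) ≤ Real.sqrt (2 * s ^ 2) := Real.sqrt_le_sqrt hlm2s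
      have h3 : Real.sqrt (2 * s ^ 2) = Real.sqrt 2 * s := by
        rw [Real.sqrt_mul (by norm_num), Real.sqrt_sq hspos.le]
      rw [h3] at h2
      linarith
    clear_value s Lm
    have hs3 : s ^ 3 < 8 * Real.sqrt 2 * c ^ 2 := by
      have h1 : 4 * c ^ 2 * Lm ≤ 4 * c ^ 2 * (2 * (Real.sqrt 2 * s)) :=
        mul_le_mul_of_nonneg_left hLm2s (by positivity)
      have h2 : s ^ 3 * s < (8 * Real.sqrt 2 * c ^ 2) * s := by
        have e1 : s ^ 3 * s = m := by rw [← hs4]; ring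
        have e2 : 4 * c ^ 2 * (2 * (Real.sqrt 2 * s)) = (8 * Real.sqrt 2 * c ^ 2) * s := by
          ring
        rw [e1, ← e2]
        exact lt_of_lt_of_le hmL h1
      exact lt_of_mul_lt_mul_right h2 hspos.le
    have hm3 : m ^ 3 < 16384 * c ^ 8 := by
      have h1 : (s ^ 3) ^ 4 < (8 * Real.sqrt 2 * c ^ 2) ^ 4 :=
        pow_lt_pow_left₀ hs3 (by positivity) (by norm_num)
      have h2 : (8 * Real.sqrt 2 * c ^ 2) ^ 4 = 16384 * c ^ 8 := by
        have hh : Real.sqrt 2 ^ 4 = 4 := by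
          rw [show Real.sqrt 2 ^ 4 = (Real.sqrt 2 ^ 2) ^ 2 by ring, hsqrt2]; norm_num
        calc (8 * Real.sqrt 2 * c ^ 2) ^ 4 = 4096 * Real.sqrt 2 ^ 4 * c ^ 8 := by ring
        _ = 16384 * c ^ 8 := by rw [hh]; ring
      have h3 : (s ^ 3) ^ 4 = m ^ 3 := by
        rw [show (s ^ 3) ^ 4 = (s ^ 4) ^ 3 by ring, hs4]
      rw [h3, h2] at h1
      exact h1
    -- m ≤ 3√3 c³
    set K : ℝ := 3 * Real.sqrt 3 * c ^ 3 with hKdef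
    have hKpos : 0 < K := by
      rw [hKdef]; positivity
    have hsqrt3sq : Real.sqrt 3 ^ 2 = 3 := Real.sq_sqrt (by norm_num)
    have hK3 : m ^ 3 ≤ K ^ 3 := by
      have h1 : K ^ 3 = 27 * (Real.sqrt 3 ^ 2 * Real.sqrt 3) * c ^ 9 := by
        rw [hKdef]; ring
      have h2 : (137:ℝ) * c ^ 9 ≤ K ^ 3 := by
        rw [h1, hsqrt3sq]
        have h2a : (1.7:ℝ) * c ^ 9 ≤ Real.sqrt 3 * c ^ 9 :=
          mul_le_mul_of_nonneg_right hsqrt3 (pow_nonneg hcpos.le 9)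
        have h2b : (0:ℝ) ≤ c ^ 9 := pow_nonneg hcpos.le 9
        linarith [h2a, h2b]
      have h3 : 143 * c ^ 8 ≤ c ^ 9 := by
        have hh := mul_le_mul_of_nonneg_left hc143 (pow_nonneg hcpos.le 8)
        calc 143 * c ^ 8 = c ^ 8 * 143 := by ring
        _ ≤ c ^ 8 * c := hh
        _ = c ^ 9 := by ring
      have h4 : 137 * (143 * c ^ 8) ≤ 137 * c ^ 9 := by linarith
      linarith [pow_nonneg hcpos.le 8]
    have hmK : m ≤ K := le_of_pow_le_pow_left₀ (by norm_num) hKpos.le hK3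
    have hfin : K ≤ 3 * c ^ 2 * Real.sqrt (x * Lx) := by
      have h1 : K = 3 * c ^ 2 * (Real.sqrt 3 * c) := by rw [hKdef]; ring
      rw [h1]
      exact mul_le_mul_of_nonneg_left hsLx (by positivity)
    linarith
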